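/- Let Σ be a d×d real symmetric positive definite matrix and let C be a d×d real lower-triangular matrix with strictly positive diagonal entries such that Σ = C Cᵀ (the Cholesky factor of Σ). If every off-diagonal entry of Σ⁻¹ is nonpositive, then every entry of C is nonnegative. -/
import Mathlib

open Matrix Finset

/-- If a symmetric positive definite matrix `S` has Cholesky decomposition
`S = C * Cᵀ` (with `C` lower triangular with strictly positive diagonal) and all
off-diagonal entries of `S⁻¹` are nonpositive, then all entries of `C` are
nonnegative. -/
theorem cholesky_nonneg_of_inv_offdiag_nonpos
    (d : ℕ) (S C : Matrix (Fin d) (Fin d) ℝ)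
    (hS : S.PosDef)
    (hC_lower : ∀ i j : Fin d, i < j → C i j = 0)
    (hC_diag : ∀ i : Fin d, 0 < C i i)
    (hfact : S = C * Cᵀ)
    (hinv : ∀ i j : Fin d, i ≠ j → S⁻¹ i j ≤ 0) :
    ∀ i j : Fin d, 0 ≤ C i j := by
  have hCtri : C.BlockTriangular OrderDual.toDual := fun i j h => hC_lower i j h
  have hdet : C.det ≠ 0 := by
    rw [Matrix.det_of_lowerTriangular C hCtri]
    exact ne_of_gt (Finset.prod_pos fun i _ => hC_diag i)
  haveI : Invertible C := C.invertibleOfIsUnitDet (isUnit_iff_ne_zero.mpr hdet)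
  set L := C⁻¹ with hLdef
  have hLtri : L.BlockTriangular OrderDual.toDual :=
    blockTriangular_inv_of_blockTriangular hCtri
  have hLlow : ∀ i j : Fin d, i < j → L i j = 0 := fun i j h => hLtri h
  have hCL : C * L = 1 := Matrix.mul_nonsing_inv C (isUnit_iff_ne_zero.mpr hdet)
  have hLC : L * C = 1 := Matrix.nonsing_inv_mul C (isUnit_iff_ne_zero.mpr hdet)
  -- diagonal of L is positive
  have hLdiag : ∀ i : Fin d, 0 < L i i := by
    intro i
    have h1 : (C * L) i i = 1 := by rw [hCL]; simp
    rw [Matrix.mul_apply] at h1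
    have h2 : ∑ k, C i k * L k i = C i i * L i i := by
      apply Finset.sum_eq_single
      · intro k _ hk
        rcases lt_or_gt_of_ne hk with h | h
        · rw [hLlow k i h, mul_zero]
        · rw [hC_lower i k h, zero_mul]
      · intro h; exact absurd (Finset.mem_univ i) h
    rw [h2] at h1
    nlinarith [hC_diag i]
  -- S⁻¹ = Lᵀ * L
  have hA : S⁻¹ = Lᵀ * L := by
    rw [hfact, Matrix.mul_inv_rev, ← Matrix.transpose_nonsing_inv]
  have hAentry : ∀ i j : Fin d, S⁻¹ i j = ∑ k, L k i * L k j := by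
    intro i j
    rw [hA, Matrix.mul_apply]
    simp [Matrix.transpose_apply]
  -- off-diagonal entries of L are nonpositive (downward induction on the row)
  have key : ∀ m : ℕ, ∀ i j : Fin d, d - i.val ≤ m → j < i → L i j ≤ 0 := by
    intro m
    induction m with
    | zero =>
      intro i j h _
      have := i.isLt
      omega
    | succ m ih =>
      intro i j hm hij
      have hAij : S⁻¹ i j ≤ 0 := hinv i j (ne_of_gt hij)
      rw [hAentry i j] at hAij
      have hsplit : ∑ k, L k i * L k j
          = L i i * L i j + ∑ k ∈ univ.erase i, L k i * L k j :=
        (Finset.add_sum_erase univ (fun k => L k i * L k j) (mem_univ i)).symm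
      have hrest : 0 ≤ ∑ k ∈ univ.erase i, L k i * L k j := by
        apply Finset.sum_nonneg
        intro k hk
        rcases lt_or_gt_of_ne (Finset.ne_of_mem_erase hk) with h | h
        · rw [hLlow k i h, zero_mul]
        · have hik : i.val < k.val := Fin.lt_def.mp h
          have hd : d - i.val ≤ m + 1 := hm
          have h1 : L k i ≤ 0 := ih k i (by omega) h
          have h2 : L k j ≤ 0 := ih k j (by omega) (hij.trans h)
          nlinarith
      rw [hsplit] at hAij
      nlinarith [hLdiag i]
  have hLneg : ∀ i j : Fin d, j < i → L i j ≤ 0 := fun i j h =>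
    key d i j (by omega) h
  -- entries of C are nonnegative (upward induction on the row)
  have step : ∀ i : Fin d, (∀ k : Fin d, k < i → ∀ j : Fin d, 0 ≤ C k j) →
      ∀ j : Fin d, 0 ≤ C i j := by
    intro i ih j
    have h1 : (L * C) i j = (1 : Matrix (Fin d) (Fin d) ℝ) i j := by rw [hLC]
    rw [Matrix.mul_apply] at h1
    have hsplit : ∑ k, L i k * C k j
        = L i i * C i j + ∑ k ∈ univ.erase i, L i k * C k j :=
      (Finset.add_sum_erase univ (fun k => L i k * C k j) (mem_univ i)).symm
    have hrest : ∑ k ∈ univ.erase i, L i k * C k j ≤ 0 := by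
      apply Finset.sum_nonpos
      intro k hk
      rcases lt_or_gt_of_ne (Finset.ne_of_mem_erase hk) with h | h
      · exact mul_nonpos_of_nonpos_of_nonneg (hLneg i k h) (ih k h j)
      · rw [hLlow i k h, zero_mul]
    have hδ : (0:ℝ) ≤ (1 : Matrix (Fin d) (Fin d) ℝ) i j := by
      rw [Matrix.one_apply]
      split_ifs <;> norm_num
    rw [hsplit] at h1
    nlinarith [hLdiag i]
  have main : ∀ n : ℕ, ∀ i : Fin d, i.val ≤ n → ∀ j : Fin d, 0 ≤ C i j := by
    intro n
    induction n with
    | zero =>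
      intro i h j
      refine step i (fun k hk j' => ?_) j
      have := Fin.lt_def.mp hk
      omega
    | succ n ih =>
      intro i h j
      refine step i (fun k hk j' => ?_) j
      have := Fin.lt_def.mp hk
      exact ih k (by omega) j'
  exact fun i j => main d i (by omega) j
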